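/- Let V be a finite-dimensional complex inner product space, G a group acting linearly on V preserving a subspace structure such that the invariant subspaces satisfy (V^{⊗k})^G ⊗ (V^{⊗l})^G ⊆ (V^{⊗(k+l)})^G, and let Π_k denote the orthogonal projection of V^{⊗k} onto the G-invariant subspace. Then for all v ∈ V and all k, l ∈ ℕ, ‖Π_{k+l}(v^{⊗(k+l)})‖ ≥ ‖Π_k(v^{⊗k})‖ · ‖Π_l(v^{⊗l})‖. -/

import Mathlib

open scoped InnerProductSpace

/-- The `k`-th tensor power `v^{⊗k}` of a vector `v ∈ ℂⁿ`, realized concretely as the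
vector in `EuclideanSpace ℂ (Fin k → Fin n)` with entries `∏ i, v (f i)`. -/
noncomputable def tpow {n : ℕ} (v : EuclideanSpace ℂ (Fin n)) (k : ℕ) :
    EuclideanSpace ℂ (Fin k → Fin n) :=
  (WithLp.equiv 2 ((Fin k → Fin n) → ℂ)).symm fun f => ∏ i, v (f i)

/-- The `k`-th tensor power of a matrix `A`, acting on the tensor power space. -/
noncomputable def tensMap {n : ℕ} (k : ℕ) (A : Matrix (Fin n) (Fin n) ℂ) :
    EuclideanSpace ℂ (Fin k → Fin n) →ₗ[ℂ] EuclideanSpace ℂ (Fin k → Fin n) :=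
  Matrix.toEuclideanLin (fun f f' => ∏ i, A (f i) (f' i))

/-- The subspace of `G`-invariant tensors in `V^{⊗k}`, for a representation
`ρ : G →* GL(n, ℂ)`. -/
noncomputable def invSub {G : Type*} [Group G] {n : ℕ}
    (ρ : G →* (Matrix (Fin n) (Fin n) ℂ)ˣ) (k : ℕ) :
    Submodule ℂ (EuclideanSpace ℂ (Fin k → Fin n)) :=
  ⨅ g : G, LinearMap.ker (tensMap k (ρ g : Matrix (Fin n) (Fin n) ℂ) - LinearMap.id)

/-- The tensor product of a tensor in `V^{⊗k}` and a tensor in `V^{⊗l}`,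
as a tensor in `V^{⊗(k+l)}`. -/
noncomputable def tmul {n k l : ℕ} (w : EuclideanSpace ℂ (Fin k → Fin n))
    (w' : EuclideanSpace ℂ (Fin l → Fin n)) :
    EuclideanSpace ℂ (Fin (k + l) → Fin n) :=
  (WithLp.equiv 2 ((Fin (k + l) → Fin n) → ℂ)).symm
    fun f => w (fun i => f (Fin.castAdd l i)) * w' (fun i => f (Fin.natAdd k i))

theorem inner_tmul {n k l : ℕ} (a c : EuclideanSpace ℂ (Fin k → Fin n))
    (b d : EuclideanSpace ℂ (Fin l → Fin n)) :
    ⟪tmul a b, tmul c d⟫_ℂ = ⟪a, c⟫_ℂ * ⟪b, d⟫_ℂ := by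
  simp only [PiLp.inner_apply, tmul, WithLp.equiv_symm_apply, WithLp.ofLp_toLp, RCLike.inner_apply]
  rw [← Equiv.sum_comp (Fin.appendEquiv (α := Fin n) k l), Fintype.sum_prod_type,
    Finset.sum_mul_sum]
  congr 1; ext g; congr 1; ext h
  have h1 : (fun i => Fin.appendEquiv (α := Fin n) k l (g, h) (Fin.castAdd l i)) = g := by
    ext i; simp [Fin.appendEquiv, Fin.append_left]
  have h2 : (fun i => Fin.appendEquiv (α := Fin n) k l (g, h) (Fin.natAdd k i)) = h := by
    ext i; simp [Fin.appendEquiv, Fin.append_right]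
  rw [h1, h2, map_mul]; ring

theorem tmul_tpow {n k l : ℕ} (v : EuclideanSpace ℂ (Fin n)) :
    tmul (tpow v k) (tpow v l) = tpow v (k + l) := by
  ext f
  simp [tmul, tpow, Fin.prod_univ_add]


theorem norm_tmul {n k l : ℕ} (w : EuclideanSpace ℂ (Fin k → Fin n))
    (w' : EuclideanSpace ℂ (Fin l → Fin n)) : ‖tmul w w'‖ = ‖w‖ * ‖w'‖ := by
  have h3 := inner_tmul w w w' w'
  rw [inner_self_eq_norm_sq_to_K, inner_self_eq_norm_sq_to_K,
    inner_self_eq_norm_sq_to_K] at h3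
  have h4 : ‖tmul w w'‖ ^ 2 = ‖w‖ ^ 2 * ‖w'‖ ^ 2 := by exact_mod_cast h3
  nlinarith [norm_nonneg (tmul w w'), mul_nonneg (norm_nonneg w) (norm_nonneg w')]

lemma proj_inner {E : Type*} [NormedAddCommGroup E] [InnerProductSpace ℂ E]
    (S : Submodule ℂ E) [Submodule.HasOrthogonalProjection S] (x : E) :
    ⟪((Submodule.orthogonalProjectionOnto S x : S) : E), x⟫_ℂ = ((‖Submodule.orthogonalProjectionOnto S x‖ : ℝ) : ℂ) ^ 2 := by
  rw [← Submodule.inner_orthogonalProjectionOnto_eq_of_mem_left, inner_self_eq_norm_sq_to_K]; norm_cast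

lemma key {E : Type*} [NormedAddCommGroup E] [InnerProductSpace ℂ E]
    (S : Submodule ℂ E) [Submodule.HasOrthogonalProjection S] (x u : E) (hu : u ∈ S) (c : ℝ)
    (hc : 0 ≤ c) (hn : ‖u‖ = c) (hi : ⟪u, x⟫_ℂ = (c : ℂ) ^ 2) :
    c ≤ ‖Submodule.orthogonalProjectionOnto S x‖ := by
  have h5 : ⟪(⟨u, hu⟩ : S), Submodule.orthogonalProjectionOnto S x⟫_ℂ = (c : ℂ) ^ 2 := by
    rw [Submodule.inner_orthogonalProjectionOnto_eq_of_mem_left]; exact hi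
  have h6 := norm_inner_le_norm (𝕜 := ℂ) (⟨u, hu⟩ : S) (Submodule.orthogonalProjectionOnto S x)
  rw [h5] at h6
  have h7 : ‖((c : ℂ)) ^ 2‖ = c ^ 2 := by
    rw [norm_pow, Complex.norm_real, Real.norm_eq_abs, abs_of_nonneg hc]
  have h8 : ‖(⟨u, hu⟩ : S)‖ = c := hn
  rw [h7, h8] at h6
  rcases eq_or_lt_of_le hc with h | h
  · rw [← h]; exact norm_nonneg _
  · nlinarith

/-- If the invariant subspaces satisfy
`(V^{⊗k})^G ⊗ (V^{⊗l})^G ⊆ (V^{⊗(k+l)})^G`, then the norms of the projections of the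
tensor powers of `v` onto the invariant subspaces are supermultiplicative. -/
theorem stmt_0 {G : Type*} [Group G] {n : ℕ}
    (ρ : G →* (Matrix (Fin n) (Fin n) ℂ)ˣ)
    (hsub : ∀ (k l : ℕ) (w : EuclideanSpace ℂ (Fin k → Fin n))
      (w' : EuclideanSpace ℂ (Fin l → Fin n)),
      w ∈ invSub ρ k → w' ∈ invSub ρ l → tmul w w' ∈ invSub ρ (k + l))
    (v : EuclideanSpace ℂ (Fin n)) (k l : ℕ) :
    ‖Submodule.orthogonalProjectionOnto (invSub ρ k) (tpow v k)‖ *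
      ‖Submodule.orthogonalProjectionOnto (invSub ρ l) (tpow v l)‖ ≤
    ‖Submodule.orthogonalProjectionOnto (invSub ρ (k + l)) (tpow v (k + l))‖ := by
  refine key (invSub ρ (k + l)) (tpow v (k + l))
    (tmul ((Submodule.orthogonalProjectionOnto (invSub ρ k) (tpow v k) : _) : EuclideanSpace ℂ (Fin k → Fin n))
      ((Submodule.orthogonalProjectionOnto (invSub ρ l) (tpow v l) : _) : EuclideanSpace ℂ (Fin l → Fin n)))
    (hsub k l _ _ (Submodule.orthogonalProjectionOnto (invSub ρ k) (tpow v k)).2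
      (Submodule.orthogonalProjectionOnto (invSub ρ l) (tpow v l)).2)
    _ (mul_nonneg (norm_nonneg _) (norm_nonneg _)) (norm_tmul _ _) ?_
  rw [← tmul_tpow, inner_tmul, proj_inner, proj_inner]
  push_cast; ring
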